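/- The Boolean-to-c-free Bercovici-Pata bijection BP is a homomorphism with respect to multiplicative c-free convolution: for compactly supported pairs (μ₁,ν₁), (μ₂,ν₂) (second coordinates with nonzero means), BP((μ₁,ν₁) ⊠_c (μ₂,ν₂)) = BP(μ₁,ν₁) ⊠_c BP(μ₂,ν₂). -/

import Mathlib

open MeasureTheory

/-- `M_σ(z) = ∫ (1-tz)⁻¹ dσ(t)`. -/
noncomputable def momGen (σ : Measure ℝ) (z : ℂ) : ℂ :=
  ∫ t : ℝ, ((1 : ℂ) - (t : ℂ) * z)⁻¹ ∂σ

/-- `M̃_σ = M_σ - 1`. -/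
noncomputable def momGenT (σ : Measure ℝ) (z : ℂ) : ℂ := momGen σ z - 1

/-- Boolean transform `B_σ(z) = 1 - M_σ(z)⁻¹`. -/
noncomputable def boolT (σ : Measure ℝ) (z : ℂ) : ℂ := 1 - (momGen σ z)⁻¹

/-- A compactly supported probability measure. -/
def Good (σ : Measure ℝ) : Prop :=
  IsProbabilityMeasure σ ∧ ∃ R : ℝ, σ (Set.Icc (-R) R)ᶜ = 0

/-- Equality of analytic germs at `0`. -/
def EqGerm (f g : ℂ → ℂ) : Prop := ∃ ε : ℝ, 0 < ε ∧ ∀ z : ℂ, ‖z‖ < ε → f z = g z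

/-- c-free T-transform `ᶜT(z) = ᶜR(R_ν⁻¹(z))/R_ν⁻¹(z)`. -/
noncomputable def cT (cR Rinv : ℂ → ℂ) : ℂ → ℂ := fun z => cR (Rinv z) / Rinv z

/-- T-transform of the second coordinate, `T_ν(z) = z/R_ν⁻¹(z)`. -/
noncomputable def fT (Rinv : ℂ → ℂ) : ℂ → ℂ := fun z => z / Rinv z

/-- `R`, `Rinv`, `cR` are the free R-transform of `ν` (with its local compositional inverse)
and the c-free R-transform of the pair `(μ,ν)`, as analytic germs at `0`. -/
def TransformData (μ ν : Measure ℝ) (R Rinv cR : ℂ → ℂ) : Prop :=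
  ∃ δ : ℝ, 0 < δ ∧ ∀ z : ℂ, ‖z‖ < δ →
    momGenT ν z = R (z + z * momGenT ν z) ∧
    Rinv (R z) = z ∧ R (Rinv z) = z ∧
    (momGen μ z - 1) * momGen ν z = momGen μ z * cR (z * momGen ν z)

/-- The pair with transforms `(cR₃,Rinv₃)` is the multiplicative c-free convolution of the
pairs with transforms `(cR₁,Rinv₁)` and `(cR₂,Rinv₂)`: both the `ᶜT`- and `T`-transforms
multiply. -/
def IsCProd (cR₁ Rinv₁ cR₂ Rinv₂ cR₃ Rinv₃ : ℂ → ℂ) : Prop :=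
  EqGerm (cT cR₃ Rinv₃) (fun z => cT cR₁ Rinv₁ z * cT cR₂ Rinv₂ z) ∧
  EqGerm (fT Rinv₃) (fun z => fT Rinv₁ z * fT Rinv₂ z)

/-- `(μ',ν')` (with c-free R-transform `cR'` and free R-transform `R'`) is the
Boolean-to-c-free Bercovici–Pata image of `(μ,ν)`: `ᶜR_{μ',ν'} = B_μ`, `R_{ν'} = B_ν`. -/
def IsBP (μ ν : Measure ℝ) (cR' R' : ℂ → ℂ) : Prop :=
  EqGerm cR' (boolT μ) ∧ EqGerm R' (boolT ν)



open Filter Set Topology Asymptotics BoundedContinuousFunction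
open scoped ENNReal NNReal

section
variable {σ : Measure ℝ}

noncomputable def FK (σ : Measure ℝ) (k : ℕ) (z : ℂ) : ℂ :=
  ∫ t : ℝ, (t : ℂ) ^ k * ((1 : ℂ) - (t : ℂ) * z)⁻¹ ∂σ

variable {R : ℝ} {z : ℂ} {k : ℕ}

lemma norm_one_sub_ge (hR : 1 ≤ R) (hz : ‖z‖ ≤ (2 * R)⁻¹) {t : ℝ} (ht : |t| ≤ R) :
    (1:ℝ)/2 ≤ ‖(1 : ℂ) - (t : ℂ) * z‖ := by
  have h0 : (0:ℝ) < R := lt_of_lt_of_le one_pos hR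
  have h1 : ‖(t:ℂ) * z‖ ≤ 1/2 := by
    rw [norm_mul, Complex.norm_real]
    calc ‖t‖ * ‖z‖ ≤ R * (2*R)⁻¹ := by
          apply mul_le_mul ht hz (norm_nonneg _) (le_of_lt h0)
      _ = 1/2 := by field_simp
  have h2 : ‖(1:ℂ)‖ - ‖(t:ℂ)*z‖ ≤ ‖(1:ℂ) - (t:ℂ)*z‖ := norm_sub_norm_le _ _
  rw [norm_one] at h2
  linarith

lemma one_sub_ne (hR : 1 ≤ R) (hz : ‖z‖ ≤ (2 * R)⁻¹) {t : ℝ} (ht : |t| ≤ R) :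
    (1 : ℂ) - (t : ℂ) * z ≠ 0 := by
  intro h
  have := norm_one_sub_ge hR hz ht
  rw [h, norm_zero] at this; linarith

lemma norm_kernel_le (hR : 1 ≤ R) (hz : ‖z‖ ≤ (2 * R)⁻¹) {t : ℝ} (ht : |t| ≤ R) :
    ‖(t : ℂ) ^ k * ((1 : ℂ) - (t : ℂ) * z)⁻¹‖ ≤ R ^ k * 2 := by
  have h0 : (0:ℝ) < R := lt_of_lt_of_le one_pos hR
  rw [norm_mul, norm_pow, norm_inv, Complex.norm_real]
  have h1 : ‖(1:ℂ) - (t:ℂ)*z‖⁻¹ ≤ 2 := by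
    have h3 := norm_one_sub_ge hR hz ht
    calc ‖(1:ℂ)-(t:ℂ)*z‖⁻¹ ≤ ((1:ℝ)/2)⁻¹ := by
          exact inv_anti₀ (by norm_num) h3
      _ = 2 := by norm_num
  apply mul_le_mul _ h1 (by positivity) (by positivity)
  exact pow_le_pow_left₀ (abs_nonneg t) ht k

lemma kernel_meas : AEStronglyMeasurable
    (fun t : ℝ => (t : ℂ) ^ k * ((1 : ℂ) - (t : ℂ) * z)⁻¹) σ := by
  apply Measurable.aestronglyMeasurable
  exact (Complex.measurable_ofReal.pow_const k).mul
    ((measurable_const.sub (Complex.measurable_ofReal.mul_const z)).inv)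

lemma integrable_kernel [IsFiniteMeasure σ] (hR : 1 ≤ R) (hz : ‖z‖ ≤ (2 * R)⁻¹)
    (hae : ∀ᵐ t ∂σ, |t| ≤ R) :
    Integrable (fun t : ℝ => (t : ℂ) ^ k * ((1 : ℂ) - (t : ℂ) * z)⁻¹) σ := by
  refine Integrable.mono' (integrable_const (R ^ k * 2)) kernel_meas ?_
  filter_upwards [hae] with t ht
  exact norm_kernel_le hR hz ht

lemma norm_FK_le [IsProbabilityMeasure σ] (hR : 1 ≤ R) (hz : ‖z‖ ≤ (2 * R)⁻¹)
    (hae : ∀ᵐ t ∂σ, |t| ≤ R) : ‖FK σ k z‖ ≤ R ^ k * 2 := by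
  have h := norm_integral_le_of_norm_le (μ := σ)
    (g := fun _ : ℝ => R ^ k * 2) (integrable_const _)
    (f := fun t : ℝ => (t : ℂ) ^ k * ((1 : ℂ) - (t : ℂ) * z)⁻¹) ?_
  · simpa [FK] using h
  · filter_upwards [hae] with t ht
    exact norm_kernel_le hR hz ht

end
lemma good_bound {σ : MeasureTheory.Measure ℝ} (h : Good σ) : ∃ R : ℝ, 1 ≤ R ∧ ∀ᵐ t ∂σ, |t| ≤ R := by
  obtain ⟨-, R, hR⟩ := h
  refine ⟨max R 1, le_max_right _ _, ?_⟩
  rw [MeasureTheory.ae_iff]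
  refine MeasureTheory.measure_mono_null (fun t ht => ?_) hR
  simp only [Set.mem_setOf_eq, not_le] at ht
  intro hc
  rw [Set.mem_Icc] at hc
  exact absurd (le_trans (abs_le.mpr hc) (le_max_left R 1)) (not_le.mpr ht)


section
variable {σ : Measure ℝ} {R : ℝ} {z : ℂ} {k : ℕ}

lemma FK_succ [IsFiniteMeasure σ] (hR : 1 ≤ R) (hz : ‖z‖ ≤ (2 * R)⁻¹)
    (hae : ∀ᵐ t ∂σ, |t| ≤ R) :
    FK σ k z - FK σ k 0 = z * FK σ (k + 1) z := by
  have h0 : ‖(0:ℂ)‖ ≤ (2*R)⁻¹ := by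
    simp; positivity
  have hi1 := integrable_kernel (σ := σ) (k := k) hR hz hae
  have hi0 := integrable_kernel (σ := σ) (k := k) (z := 0) hR h0 hae
  rw [FK, FK, FK, ← integral_sub hi1 hi0, ← integral_const_mul]
  refine integral_congr_ae ?_
  filter_upwards [hae] with t ht
  have hne := one_sub_ne hR hz ht
  field_simp
  ring

lemma FK_zero : FK σ k 0 = ((∫ t : ℝ, t ^ k ∂σ : ℝ) : ℂ) := by
  rw [FK]
  have : ∀ t : ℝ, (t : ℂ) ^ k * ((1:ℂ) - (t:ℂ) * 0)⁻¹ = ((t ^ k : ℝ) : ℂ) := by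
    intro t; push_cast; simp
  simp_rw [this]
  exact integral_ofReal

lemma norm_FK_sub_le [IsProbabilityMeasure σ] (hR : 1 ≤ R) (hz : ‖z‖ ≤ (2 * R)⁻¹)
    (hae : ∀ᵐ t ∂σ, |t| ≤ R) :
    ‖FK σ k z - FK σ k 0‖ ≤ ‖z‖ * (R ^ (k + 1) * 2) := by
  rw [FK_succ hR hz hae, norm_mul]
  exact mul_le_mul_of_nonneg_left (norm_FK_le hR hz hae) (norm_nonneg z)

lemma momGen_eq_FK : momGen σ z = FK σ 0 z := by
  rw [momGen, FK]; congr 1; ext t; simp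

lemma momGen_zero [IsProbabilityMeasure σ] : momGen σ 0 = 1 := by
  rw [momGen_eq_FK, FK_zero]; simp

lemma momGenT_zero [IsProbabilityMeasure σ] : momGenT σ 0 = 0 := by
  rw [momGenT, momGen_zero]; ring

lemma norm_momGenT_le [IsProbabilityMeasure σ] (hR : 1 ≤ R) (hz : ‖z‖ ≤ (2 * R)⁻¹)
    (hae : ∀ᵐ t ∂σ, |t| ≤ R) : ‖momGenT σ z‖ ≤ ‖z‖ * (R * 2) := by
  have h := norm_FK_sub_le (σ := σ) (k := 0) hR hz hae
  rw [pow_one] at h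
  have e : momGenT σ z = FK σ 0 z - FK σ 0 0 := by
    rw [momGenT, momGen_eq_FK, FK_zero]; simp
  rw [e]; exact h

end


section
variable {σ : Measure ℝ} {R : ℝ}

lemma key_est [IsProbabilityMeasure σ] (hR : 1 ≤ R) (hae : ∀ᵐ t ∂σ, |t| ≤ R)
    {a b : ℂ} (ha : ‖a‖ ≤ (2 * R)⁻¹) (hb : ‖b‖ ≤ (2 * R)⁻¹) :
    ‖momGen σ a - momGen σ b - (a - b) * FK σ 1 0‖ ≤ 6 * R ^ 2 * (‖a‖ + ‖b‖) * ‖a - b‖ := by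
  have h0R : (0:ℝ) < R := lt_of_lt_of_le one_pos hR
  have h0 : ‖(0:ℂ)‖ ≤ (2*R)⁻¹ := by simp; positivity
  have hia := integrable_kernel (σ := σ) (k := 0) hR ha hae
  have hib := integrable_kernel (σ := σ) (k := 0) hR hb hae
  have hi1 := integrable_kernel (σ := σ) (k := 1) (z := 0) hR h0 hae
  have hiab : Integrable (fun t : ℝ => (t:ℂ)^0 * ((1:ℂ) - t*a)⁻¹ - (t:ℂ)^0 * ((1:ℂ) - t*b)⁻¹) σ :=
    hia.sub hib
  have hic : Integrable (fun t : ℝ => (a - b) * ((t:ℂ)^1 * ((1:ℂ) - (t:ℂ)*0)⁻¹)) σ :=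
    hi1.const_mul _
  have e : momGen σ a - momGen σ b - (a - b) * FK σ 1 0 =
      ∫ t : ℝ, ((t:ℂ)^0 * ((1:ℂ) - t*a)⁻¹ - (t:ℂ)^0 * ((1:ℂ) - t*b)⁻¹
        - (a - b) * ((t:ℂ)^1 * ((1:ℂ) - (t:ℂ)*0)⁻¹)) ∂σ := by
    rw [integral_sub hiab hic, integral_sub hia hib,
      integral_const_mul, momGen_eq_FK, momGen_eq_FK, FK, FK, FK]
  rw [e]
  have hbd : ∀ᵐ (t : ℝ) ∂σ, ‖((t:ℂ)^0 * ((1:ℂ) - t*a)⁻¹ - (t:ℂ)^0 * ((1:ℂ) - t*b)⁻¹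
        - (a - b) * ((t:ℂ)^1 * ((1:ℂ) - (t:ℂ)*0)⁻¹))‖ ≤ 6 * R ^ 2 * (‖a‖ + ‖b‖) * ‖a - b‖ := by
    filter_upwards [hae] with t ht
    have hna := one_sub_ne hR ha ht
    have hnb := one_sub_ne hR hb ht
    have eid : (t:ℂ)^0 * ((1:ℂ) - t*a)⁻¹ - (t:ℂ)^0 * ((1:ℂ) - t*b)⁻¹
        - (a - b) * ((t:ℂ)^1 * ((1:ℂ) - (t:ℂ)*0)⁻¹)
        = (a - b) * ((t:ℂ)^2 * (a + b - t*a*b) * (((1:ℂ) - t*a) * ((1:ℂ) - t*b))⁻¹) := by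
      field_simp
      ring
    rw [eid, norm_mul, mul_comm]
    apply mul_le_mul_of_nonneg_right _ (norm_nonneg _)
    have hRa : R * ‖a‖ ≤ 1/2 := by
      calc R * ‖a‖ ≤ R * (2*R)⁻¹ := mul_le_mul_of_nonneg_left ha (le_of_lt h0R)
        _ = 1/2 := by field_simp
    have h1 : ‖a + b - (t:ℂ)*a*b‖ ≤ (3/2) * (‖a‖ + ‖b‖) := by
      calc ‖a + b - (t:ℂ)*a*b‖ ≤ ‖a + b‖ + ‖(t:ℂ)*a*b‖ := norm_sub_le _ _
        _ ≤ (‖a‖ + ‖b‖) + |t| * ‖a‖ * ‖b‖ := by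
            rw [norm_mul, norm_mul, Complex.norm_real]
            exact add_le_add (norm_add_le _ _) le_rfl
        _ ≤ (3/2) * (‖a‖ + ‖b‖) := by
            have : |t| * ‖a‖ * ‖b‖ ≤ (1/2) * ‖b‖ := by
              have h2 : |t| * ‖a‖ ≤ R * ‖a‖ :=
                mul_le_mul_of_nonneg_right ht (norm_nonneg a)
              have h3 : |t| * ‖a‖ ≤ 1/2 := le_trans h2 hRa
              exact mul_le_mul_of_nonneg_right h3 (norm_nonneg b)
            have hb0 : (0:ℝ) ≤ ‖b‖ := norm_nonneg b
            have ha0 : (0:ℝ) ≤ ‖a‖ := norm_nonneg a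
            linarith
    have h2 : ‖(((1:ℂ) - t*a) * ((1:ℂ) - t*b))⁻¹‖ ≤ 4 := by
      rw [norm_inv, norm_mul]
      have ga := norm_one_sub_ge hR ha ht
      have gb := norm_one_sub_ge hR hb ht
      have : (1:ℝ)/4 ≤ ‖(1:ℂ) - t*a‖ * ‖(1:ℂ) - t*b‖ := by nlinarith [norm_nonneg ((1:ℂ) - t*a)]
      calc (‖(1:ℂ) - t*a‖ * ‖(1:ℂ) - t*b‖)⁻¹ ≤ ((1:ℝ)/4)⁻¹ := by
            apply inv_anti₀ (by norm_num) this
        _ = 4 := by norm_num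
    calc ‖(t:ℂ)^2 * (a + b - t*a*b) * (((1:ℂ) - t*a) * ((1:ℂ) - t*b))⁻¹‖
        = ‖(t:ℂ)^2‖ * ‖a + b - (t:ℂ)*a*b‖ * ‖(((1:ℂ) - t*a) * ((1:ℂ) - t*b))⁻¹‖ := by
          rw [norm_mul, norm_mul]
      _ ≤ R^2 * ((3/2) * (‖a‖ + ‖b‖)) * 4 := by
          apply mul_le_mul _ h2 (norm_nonneg _) (by positivity)
          apply mul_le_mul _ h1 (norm_nonneg _) (by positivity)
          rw [norm_pow, Complex.norm_real]
          exact pow_le_pow_left₀ (abs_nonneg t) ht 2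
      _ = 6 * R ^ 2 * (‖a‖ + ‖b‖) := by ring
  calc ‖∫ t : ℝ, ((t:ℂ)^0 * ((1:ℂ) - t*a)⁻¹ - (t:ℂ)^0 * ((1:ℂ) - t*b)⁻¹
        - (a - b) * ((t:ℂ)^1 * ((1:ℂ) - (t:ℂ)*0)⁻¹)) ∂σ‖
      ≤ ∫ _t : ℝ, (6 * R ^ 2 * (‖a‖ + ‖b‖) * ‖a - b‖) ∂σ :=
        norm_integral_le_of_norm_le (integrable_const _) hbd
    _ = 6 * R ^ 2 * (‖a‖ + ‖b‖) * ‖a - b‖ := by simp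

end


section
variable {σ : Measure ℝ} {R : ℝ}

lemma FK_one_zero : FK σ 1 0 = ((∫ t : ℝ, t ∂σ : ℝ) : ℂ) := by
  have := FK_zero (σ := σ) (k := 1)
  simpa using this

lemma hasStrictDerivAt_momGen [IsProbabilityMeasure σ] (hR : 1 ≤ R)
    (hae : ∀ᵐ t ∂σ, |t| ≤ R) :
    HasStrictDerivAt (momGen σ) (FK σ 1 0) 0 := by
  have h0R : (0:ℝ) < R := lt_of_lt_of_le one_pos hR
  refine HasStrictFDerivAt.of_isLittleO ?_
  rw [isLittleO_iff]
  intro c hc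
  set s : ℝ := min (2*R)⁻¹ (c / (12 * R^2)) with hs
  have hs0 : 0 < s := lt_min (by positivity) (by positivity)
  have hball : ∀ᶠ p : ℂ × ℂ in 𝓝 (0, 0), ‖p.1‖ < s ∧ ‖p.2‖ < s := by
    rw [nhds_prod_eq]
    have h1 : ∀ᶠ x : ℂ in 𝓝 0, ‖x‖ < s := by
      have := Metric.ball_mem_nhds (0:ℂ) hs0
      exact eventually_of_mem this (fun x hx => mem_ball_zero_iff.mp hx)
    exact h1.prod_mk h1
  filter_upwards [hball] with p hp
  obtain ⟨h1, h2⟩ := hp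
  have ha : ‖p.1‖ ≤ (2*R)⁻¹ := le_of_lt (lt_of_lt_of_le h1 (min_le_left _ _))
  have hb : ‖p.2‖ ≤ (2*R)⁻¹ := le_of_lt (lt_of_lt_of_le h2 (min_le_left _ _))
  have key := key_est hR hae ha hb
  have e : momGen σ p.1 - momGen σ p.2 -
      (ContinuousLinearMap.toSpanSingleton ℂ (FK σ 1 0)) (p.1 - p.2)
      = momGen σ p.1 - momGen σ p.2 - (p.1 - p.2) * FK σ 1 0 := by
    simp [ContinuousLinearMap.toSpanSingleton_apply, smul_eq_mul]
  rw [e]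
  refine le_trans key ?_
  apply mul_le_mul_of_nonneg_right _ (norm_nonneg _)
  have hsc : s ≤ c / (12 * R^2) := min_le_right _ _
  have : ‖p.1‖ + ‖p.2‖ ≤ 2 * (c / (12 * R^2)) := by
    have := le_of_lt h1; have := le_of_lt h2; linarith [le_trans (le_of_lt h1) hsc, le_trans (le_of_lt h2) hsc]
  calc 6 * R^2 * (‖p.1‖ + ‖p.2‖) ≤ 6 * R^2 * (2 * (c / (12 * R^2))) := by
        apply mul_le_mul_of_nonneg_left this (by positivity)
    _ = c := by field_simp; ring

lemma hasStrictDerivAt_momGenT [IsProbabilityMeasure σ] (hR : 1 ≤ R)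
    (hae : ∀ᵐ t ∂σ, |t| ≤ R) :
    HasStrictDerivAt (momGenT σ) (FK σ 1 0) 0 := by
  have h := (hasStrictDerivAt_momGen hR hae).sub_const (1:ℂ)
  exact h

lemma map_momGenT [IsProbabilityMeasure σ] (hR : 1 ≤ R)
    (hae : ∀ᵐ t ∂σ, |t| ≤ R) (hm : (∫ t : ℝ, t ∂σ) ≠ 0) :
    Filter.map (momGenT σ) (𝓝 0) = 𝓝 0 := by
  have hm' : FK σ 1 0 ≠ 0 := by
    rw [FK_one_zero]; exact_mod_cast hm
  have h := (hasStrictDerivAt_momGenT hR hae).map_nhds_eq hm'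
  rwa [momGenT_zero] at h

lemma tendsto_momGenT [IsProbabilityMeasure σ] (hR : 1 ≤ R)
    (hae : ∀ᵐ t ∂σ, |t| ≤ R) :
    Filter.Tendsto (momGenT σ) (𝓝 0) (𝓝 0) := by
  have h := (HasStrictDerivAt.hasDerivAt (hasStrictDerivAt_momGenT hR hae)).continuousAt
  have := h.tendsto
  rwa [momGenT_zero] at this

lemma tendsto_zmom [IsProbabilityMeasure σ] (hR : 1 ≤ R)
    (hae : ∀ᵐ t ∂σ, |t| ≤ R) :
    Filter.Tendsto (fun z : ℂ => z * momGen σ z) (𝓝 0) (𝓝 0) := by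
  have h1 : Filter.Tendsto (momGen σ) (𝓝 0) (𝓝 1) := by
    have := tendsto_momGenT (σ := σ) hR hae
    have h2 : momGen σ = fun z => momGenT σ z + 1 := by
      funext z; rw [momGenT]; ring
    rw [h2]
    simpa using this.add tendsto_const_nhds
  have h3 : Filter.Tendsto (fun z : ℂ => z) (𝓝 0) (𝓝 0) := tendsto_id
  have := h3.mul h1
  simpa using this

end


section
variable {σ τ : Measure ℝ} {R : ℝ} {z₀ : ℂ} {k : ℕ}

lemma center_eq [IsProbabilityMeasure σ] [IsProbabilityMeasure τ] (hR : 1 ≤ R)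
    (haeσ : ∀ᵐ t ∂σ, |t| ≤ R) (haeτ : ∀ᵐ t ∂τ, |t| ≤ R) {ε' : ℝ} (hε' : 0 < ε')
    (hε'R : ε' ≤ (2 * R)⁻¹)
    (h : ∀ z : ℂ, ‖z‖ < ε' → z ≠ 0 → z ≠ z₀ → FK σ k z = FK τ k z) :
    FK σ k 0 = FK τ k 0 := by
  have h0R : (0:ℝ) < R := lt_of_lt_of_le one_pos hR
  set C : ℝ := R ^ (k+1) * 2 with hC
  have hC0 : 0 < C := by positivity
  have key : ∀ r : ℝ, 0 < r → r < ε' → ‖FK σ k 0 - FK τ k 0‖ ≤ 2 * (r * C) := by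
    intro r hr hrε
    set z : ℂ := if ((r : ℂ)) = z₀ then ((r/2 : ℝ) : ℂ) else ((r : ℝ) : ℂ) with hz
    have hznorm : ‖z‖ ≤ r := by
      rw [hz]; split
      · rw [Complex.norm_real, Real.norm_eq_abs, abs_of_pos (by linarith)]; linarith
      · rw [Complex.norm_real, Real.norm_eq_abs, abs_of_pos hr]
    have hz0 : z ≠ 0 := by
      rw [hz]; split
      · exact_mod_cast (by positivity : (r/2 : ℝ) ≠ 0)
      · exact_mod_cast (ne_of_gt hr)
    have hzz₀ : z ≠ z₀ := by
      rw [hz]; split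
      · rename_i heq
        intro hc
        rw [← heq] at hc
        have h2 : (r/2 : ℝ) = r := by exact_mod_cast hc
        linarith
      · assumption
    have hzε : ‖z‖ < ε' := lt_of_le_of_lt hznorm hrε
    have hz2R : ‖z‖ ≤ (2*R)⁻¹ := le_trans hznorm (le_trans (le_of_lt hrε) hε'R)
    have heq := h z hzε hz0 hzz₀
    have b1 := norm_FK_sub_le (σ := σ) (k := k) hR hz2R haeσ
    have b2 := norm_FK_sub_le (σ := τ) (k := k) hR hz2R haeτ
    calc ‖FK σ k 0 - FK τ k 0‖
        = ‖(FK σ k 0 - FK σ k z) + (FK τ k z - FK τ k 0)‖ := by rw [heq]; ring_nf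
      _ ≤ ‖FK σ k 0 - FK σ k z‖ + ‖FK τ k z - FK τ k 0‖ := norm_add_le _ _
      _ ≤ ‖z‖ * C + ‖z‖ * C := by
          rw [norm_sub_rev (FK σ k 0)]
          exact add_le_add b1 b2
      _ ≤ 2 * (r * C) := by nlinarith [norm_nonneg z]
  by_contra hne
  have hΔ : 0 < ‖FK σ k 0 - FK τ k 0‖ := by
    rw [norm_pos_iff]; exact sub_ne_zero_of_ne hne
  set r : ℝ := min (ε'/2) (‖FK σ k 0 - FK τ k 0‖ / (8 * C)) with hr
  have hr0 : 0 < r := lt_min (by linarith) (by positivity)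
  have hrε : r < ε' := lt_of_le_of_lt (min_le_left _ _) (by linarith)
  have hkey := key r hr0 hrε
  have hrΔ : r ≤ ‖FK σ k 0 - FK τ k 0‖ / (8 * C) := min_le_right _ _
  have h2 : r * C ≤ ‖FK σ k 0 - FK τ k 0‖ / 8 := by
    have h3 := mul_le_mul_of_nonneg_right hrΔ (le_of_lt hC0)
    calc r * C ≤ ‖FK σ k 0 - FK τ k 0‖ / (8 * C) * C := h3
      _ = ‖FK σ k 0 - FK τ k 0‖ / 8 := by field_simp
  linarith

lemma moments_eq (hσ : Good σ) (hτ : Good τ) {z₀ : ℂ} {ε : ℝ} (hε : 0 < ε)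
    (h : ∀ z : ℂ, ‖z‖ < ε → z ≠ 0 → z ≠ z₀ → momGen σ z = momGen τ z) :
    ∀ k : ℕ, (∫ t : ℝ, t ^ k ∂σ) = ∫ t : ℝ, t ^ k ∂τ := by
  haveI := hσ.1; haveI := hτ.1
  obtain ⟨Rσ, hRσ, haeσ⟩ := good_bound hσ
  obtain ⟨Rτ, hRτ, haeτ⟩ := good_bound hτ
  set R : ℝ := max Rσ Rτ with hRdef
  have hR : 1 ≤ R := le_trans hRσ (le_max_left _ _)
  have h0R : (0:ℝ) < R := lt_of_lt_of_le one_pos hR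
  have haeσ' : ∀ᵐ t ∂σ, |t| ≤ R := by
    filter_upwards [haeσ] with t ht; exact le_trans ht (le_max_left _ _)
  have haeτ' : ∀ᵐ t ∂τ, |t| ≤ R := by
    filter_upwards [haeτ] with t ht; exact le_trans ht (le_max_right _ _)
  set ε' : ℝ := min ε (2*R)⁻¹ with hε'def
  have hε' : 0 < ε' := lt_min hε (by positivity)
  have hε'R : ε' ≤ (2*R)⁻¹ := min_le_right _ _
  have main : ∀ k : ℕ, ∀ z : ℂ, ‖z‖ < ε' → z ≠ 0 → z ≠ z₀ → FK σ k z = FK τ k z := by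
    intro k
    induction k with
    | zero =>
      intro z hz hz0 hzz₀
      rw [← momGen_eq_FK, ← momGen_eq_FK]
      exact h z (lt_of_lt_of_le hz (min_le_left _ _)) hz0 hzz₀
    | succ k ih =>
      have hctr := center_eq hR haeσ' haeτ' hε' hε'R ih
      intro z hz hz0 hzz₀
      have hz2R : ‖z‖ ≤ (2*R)⁻¹ := le_trans (le_of_lt hz) hε'R
      have e1 := FK_succ (σ := σ) (k := k) hR hz2R haeσ'
      have e2 := FK_succ (σ := τ) (k := k) hR hz2R haeτ'
      have : z * FK σ (k+1) z = z * FK τ (k+1) z := by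
        rw [← e1, ← e2, ih z hz hz0 hzz₀, hctr]
      exact mul_left_cancel₀ hz0 this
  intro k
  have hctr := center_eq hR haeσ' haeτ' hε' hε'R (main k)
  rw [FK_zero, FK_zero] at hctr
  exact_mod_cast hctr

end


section
variable {σ τ : Measure ℝ} {R : ℝ}

lemma integrable_of_ae_bdd [IsFiniteMeasure σ] {g : ℝ → ℝ} (hmeas : Measurable g)
    {C : ℝ} (hbd : ∀ᵐ t ∂σ, |g t| ≤ C) : Integrable g σ :=
  Integrable.mono' (integrable_const C) hmeas.aestronglyMeasurable
    (by filter_upwards [hbd] with t ht; simpa using ht)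

lemma integral_poly_eq [IsFiniteMeasure σ] [IsFiniteMeasure τ]
    (hR : 1 ≤ R) (haeσ : ∀ᵐ t ∂σ, |t| ≤ R) (haeτ : ∀ᵐ t ∂τ, |t| ≤ R)
    (hm : ∀ k : ℕ, (∫ t : ℝ, t ^ k ∂σ) = ∫ t : ℝ, t ^ k ∂τ) (q : Polynomial ℝ) :
    ∫ t : ℝ, q.eval t ∂σ = ∫ t : ℝ, q.eval t ∂τ := by
  have hmono : ∀ (ρ : Measure ℝ) (_ : IsFiniteMeasure ρ) (_ : ∀ᵐ t ∂ρ, |t| ≤ R) (i : ℕ),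
      Integrable (fun t : ℝ => q.coeff i * t ^ i) ρ := by
    intro ρ hfin hae i
    refine integrable_of_ae_bdd ((measurable_id.pow_const i).const_mul _) (C := |q.coeff i| * R ^ i) ?_
    filter_upwards [hae] with t ht
    rw [abs_mul, abs_pow]
    apply mul_le_mul_of_nonneg_left _ (abs_nonneg _)
    exact pow_le_pow_left₀ (abs_nonneg t) ht i
  have expand : ∀ (ρ : Measure ℝ) (_ : IsFiniteMeasure ρ) (_ : ∀ᵐ t ∂ρ, |t| ≤ R),
      ∫ t : ℝ, q.eval t ∂ρ = ∑ i ∈ Finset.range (q.natDegree + 1), q.coeff i * ∫ t : ℝ, t ^ i ∂ρ := by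
    intro ρ hfin hae
    have : ∫ t : ℝ, q.eval t ∂ρ
        = ∫ t : ℝ, (∑ i ∈ Finset.range (q.natDegree + 1), q.coeff i * t ^ i) ∂ρ := by
      congr 1; funext t; exact Polynomial.eval_eq_sum_range t
    rw [this, integral_finset_sum _ (fun i _ => hmono ρ hfin hae i)]
    congr 1; funext i
    exact integral_const_mul _ _
  rw [expand σ inferInstance haeσ, expand τ inferInstance haeτ]
  refine Finset.sum_congr rfl (fun i _ => ?_)
  rw [hm i]

lemma measure_eq_of_moments (hσ : Good σ) (hτ : Good τ)
    (hm : ∀ k : ℕ, (∫ t : ℝ, t ^ k ∂σ) = ∫ t : ℝ, t ^ k ∂τ) : σ = τ := by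
  haveI := hσ.1; haveI := hτ.1
  obtain ⟨Rσ, hRσ, haeσ0⟩ := good_bound hσ
  obtain ⟨Rτ, hRτ, haeτ0⟩ := good_bound hτ
  set R : ℝ := max Rσ Rτ with hRdef
  have hR : 1 ≤ R := le_trans hRσ (le_max_left _ _)
  have h0R : (0:ℝ) < R := lt_of_lt_of_le one_pos hR
  have haeσ : ∀ᵐ t ∂σ, |t| ≤ R := by
    filter_upwards [haeσ0] with t ht; exact le_trans ht (le_max_left _ _)
  have haeτ : ∀ᵐ t ∂τ, |t| ≤ R := by
    filter_upwards [haeτ0] with t ht; exact le_trans ht (le_max_right _ _)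
  apply ext_of_forall_lintegral_eq_of_IsFiniteMeasure
  intro f
  have key : ∫ x, (f x : ℝ) ∂σ = ∫ x, (f x : ℝ) ∂τ := by
    -- bounded continuous g
    set g : ℝ → ℝ := fun x => (f x : ℝ) with hg
    have hgc : Continuous g := NNReal.continuous_coe.comp f.continuous
    have hgb : ∀ x, |g x| ≤ nndist 0 f := by
      intro x
      rw [abs_of_nonneg (by positivity)]
      exact_mod_cast f.apply_le_nndist_zero x
    have hgint : ∀ (ρ : Measure ℝ) (_ : IsFiniteMeasure ρ), Integrable g ρ := by
      intro ρ _
      exact integrable_of_ae_bdd hgc.measurable (ae_of_all _ hgb)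
    -- Stone-Weierstrass approximation
    have hdiff : ∀ ε : ℝ, 0 < ε → |(∫ x, g x ∂σ) - ∫ x, g x ∂τ| ≤ 2 * ε := by
      intro ε hε
      set F : C(Icc (-R) R, ℝ) := ⟨fun x => g x.val, hgc.comp continuous_subtype_val⟩ with hF
      have hcl : F ∈ closure ((polynomialFunctions (Icc (-R) R) : Set C(Icc (-R) R, ℝ))) := by
        have h1 := polynomialFunctions_closure_eq_top (-R) R
        have h2 : F ∈ (polynomialFunctions (Icc (-R) R)).topologicalClosure := by
          rw [h1]; exact trivial
        rwa [← Subalgebra.topologicalClosure_coe]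
      obtain ⟨G, hGmem, hGdist⟩ := Metric.mem_closure_iff.mp hcl ε hε
      rw [polynomialFunctions_coe] at hGmem
      obtain ⟨q, hq⟩ := hGmem
      -- q.eval approximates g on K
      have happrox : ∀ t : ℝ, |t| ≤ R → |g t - q.eval t| ≤ ε := by
        intro t ht
        have htK : t ∈ Icc (-R) R := by rw [mem_Icc]; exact abs_le.mp ht
        have h3 : dist (F ⟨t, htK⟩) (G ⟨t, htK⟩) ≤ dist F G := ContinuousMap.dist_apply_le_dist _
        have h4 : G ⟨t, htK⟩ = q.eval t := by rw [← hq]; rfl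
        have h5 : F ⟨t, htK⟩ = g t := rfl
        rw [Real.dist_eq, h4, h5] at h3
        exact le_trans h3 (le_of_lt hGdist)
      -- polynomial is integrable
      have hqbd : ∃ B : ℝ, ∀ t : ℝ, |t| ≤ R → |q.eval t| ≤ B := by
        obtain ⟨B, hB⟩ := (isCompact_Icc (a := -R) (b := R)).exists_bound_of_continuousOn
          (q.continuous_aeval.continuousOn)
        exact ⟨B, fun t ht => by
          have := hB t (by rw [mem_Icc]; exact abs_le.mp ht)
          simpa using this⟩
      obtain ⟨B, hB⟩ := hqbd
      have hqint : ∀ (ρ : Measure ℝ) (_ : IsFiniteMeasure ρ) (_ : ∀ᵐ t ∂ρ, |t| ≤ R),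
          Integrable (fun t : ℝ => q.eval t) ρ := by
        intro ρ _ hae
        refine integrable_of_ae_bdd (q.continuous_aeval).measurable (C := B) ?_
        filter_upwards [hae] with t ht
        exact hB t ht
      have hIσ := hqint σ inferInstance haeσ
      have hIτ := hqint τ inferInstance haeτ
      have hqeq : ∫ t : ℝ, q.eval t ∂σ = ∫ t : ℝ, q.eval t ∂τ :=
        integral_poly_eq hR haeσ haeτ hm q
      have dbound : ∀ (ρ : Measure ℝ) (_ : IsProbabilityMeasure ρ) (_ : ∀ᵐ t ∂ρ, |t| ≤ R),
          |(∫ x, g x ∂ρ) - ∫ t : ℝ, q.eval t ∂ρ| ≤ ε := by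
        intro ρ hρ hae
        rw [← integral_sub (hgint ρ inferInstance) (hqint ρ inferInstance hae)]
        have hb := norm_integral_le_of_norm_le (μ := ρ)
          (g := fun _ : ℝ => ε) (integrable_const _)
          (f := fun t : ℝ => g t - q.eval t) ?_
        · simpa [Real.norm_eq_abs] using hb
        · filter_upwards [hae] with t ht
          simpa [Real.norm_eq_abs] using happrox t ht
      have d1 := dbound σ inferInstance haeσ
      have d2 := dbound τ inferInstance haeτ
      have e4 : (∫ x, g x ∂σ) - ∫ x, g x ∂τ
          = ((∫ x, g x ∂σ) - ∫ t : ℝ, q.eval t ∂σ)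
            + ((∫ t : ℝ, q.eval t ∂τ) - ∫ x, g x ∂τ) := by
        rw [hqeq]; ring
      rw [e4]
      refine le_trans (abs_add_le _ _) ?_
      rw [abs_sub_comm (∫ t : ℝ, q.eval t ∂τ)]
      linarith
    have h0 : |(∫ x, g x ∂σ) - ∫ x, g x ∂τ| = 0 := by
      by_contra hc
      have hpos : 0 < |(∫ x, g x ∂σ) - ∫ x, g x ∂τ| := lt_of_le_of_ne (abs_nonneg _) (Ne.symm hc)
      have := hdiff (|(∫ x, g x ∂σ) - ∫ x, g x ∂τ| / 4) (by linarith)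
      linarith
    have := abs_eq_zero.mp h0
    linarith [sub_eq_zero.mp this]
  have h1 := lintegral_lt_top_of_nnreal σ f
  have h2 := lintegral_lt_top_of_nnreal τ f
  have e3 : (∫⁻ x, (f x : ℝ≥0∞) ∂σ).toReal = (∫⁻ x, (f x : ℝ≥0∞) ∂τ).toReal := by
    rw [toReal_lintegral_coe_eq_integral f σ, toReal_lintegral_coe_eq_integral f τ]
    exact key
  exact (ENNReal.toReal_eq_toReal_iff' h1.ne h2.ne).mp e3
end


section
variable {μ ν : Measure ℝ} {f g R Rinv cR : ℂ → ℂ}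

lemma EqGerm.eventually (h : EqGerm f g) : ∀ᶠ z in 𝓝 (0:ℂ), f z = g z := by
  obtain ⟨ε, hε, h⟩ := h
  refine eventually_of_mem (Metric.ball_mem_nhds (0:ℂ) hε) (fun z hz => h z ?_)
  simpa using mem_ball_zero_iff.mp hz

lemma eventually_to_ball {P : ℂ → Prop} (h : ∀ᶠ z in 𝓝 (0:ℂ), P z) :
    ∃ ε : ℝ, 0 < ε ∧ ∀ z : ℂ, ‖z‖ < ε → P z := by
  rw [Metric.eventually_nhds_iff] at h
  obtain ⟨ε, hε, h⟩ := h
  exact ⟨ε, hε, fun z hz => h (by simpa [Complex.dist_eq] using hz)⟩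

lemma ev_norm_lt {c : ℝ} (hc : 0 < c) : ∀ᶠ z : ℂ in 𝓝 0, ‖z‖ < c :=
  eventually_of_mem (Metric.ball_mem_nhds (0:ℂ) hc) (fun z hz => mem_ball_zero_iff.mp hz)

lemma good_tendsto_momGenT (hν : Good ν) : Tendsto (momGenT ν) (𝓝 0) (𝓝 0) := by
  haveI := hν.1
  obtain ⟨R, hR, hae⟩ := good_bound hν
  exact tendsto_momGenT hR hae

lemma good_tendsto_zmom (hν : Good ν) :
    Tendsto (fun z : ℂ => z * momGen ν z) (𝓝 0) (𝓝 0) := by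
  haveI := hν.1
  obtain ⟨R, hR, hae⟩ := good_bound hν
  exact tendsto_zmom hR hae

lemma good_map_momGenT (hν : Good ν) (hm : (∫ t : ℝ, t ∂ν) ≠ 0) :
    Filter.map (momGenT ν) (𝓝 0) = 𝓝 0 := by
  haveI := hν.1
  obtain ⟨R, hR, hae⟩ := good_bound hν
  exact map_momGenT hR hae hm

lemma ev_momGen_ne (hμ : Good μ) : ∀ᶠ z in 𝓝 (0:ℂ), momGen μ z ≠ 0 := by
  have h := (good_tendsto_momGenT hμ).eventually (ev_norm_lt (c := 1/2) (by norm_num))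
  filter_upwards [h] with z hz
  intro hc
  rw [momGenT, hc] at hz
  simp at hz
  linarith

/-- All basic consequences of `TransformData`, as eventual statements at `0`. -/
lemma TD_basic (hμ : Good μ) (hν : Good ν) (hT : TransformData μ ν R Rinv cR) :
    ∀ᶠ z in 𝓝 (0:ℂ),
      momGenT ν z = R (z * momGen ν z) ∧
      Rinv (momGenT ν z) = z * momGen ν z ∧
      cR (z * momGen ν z) = boolT μ z * momGen ν z ∧
      (momGen μ z - 1) * momGen ν z = momGen μ z * cR (z * momGen ν z) := by
  obtain ⟨δ, hδ, hTD⟩ := hT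
  have hev1 : ∀ᶠ z in 𝓝 (0:ℂ), ‖z‖ < δ := ev_norm_lt hδ
  have hev2 : ∀ᶠ z in 𝓝 (0:ℂ), ‖z * momGen ν z‖ < δ :=
    (good_tendsto_zmom hν).eventually (ev_norm_lt hδ)
  filter_upwards [hev1, hev2, ev_momGen_ne hμ] with z hz hzM hMμ
  have h := hTD z hz
  have hw := hTD (z * momGen ν z) hzM
  have e0 : z + z * momGenT ν z = z * momGen ν z := by simp only [momGenT]; ring
  have h1 : momGenT ν z = R (z * momGen ν z) := by rw [← e0]; exact h.1
  refine ⟨h1, ?_, ?_, h.2.2.2⟩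
  · rw [h1]; exact hw.2.1
  · have h4 := h.2.2.2
    simp only [boolT]
    refine mul_left_cancel₀ hMμ ?_
    rw [← h4]
    field_simp
end


section
variable {μ ν μ' ν' : Measure ℝ} {R Rinv cR R' Rinv' cR' : ℂ → ℂ}

lemma div_cancel_aux {y a b : ℂ} (hy : y ≠ 0) (h : y / a = y / b) : a = b := by
  by_cases ha : a = 0
  · subst ha
    rw [div_zero] at h
    rcases div_eq_zero_iff.mp h.symm with h1 | h1
    · exact absurd h1 hy
    · exact h1.symm
  · by_cases hb : b = 0
    · subst hb
      rw [div_zero] at h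
      rcases div_eq_zero_iff.mp h with h1 | h1
      · exact absurd h1 hy
      · exact absurd h1 ha
    · rw [div_eq_div_iff ha hb] at h
      exact (mul_left_cancel₀ hy h).symm

/-- `T`- and `ᶜT`-transforms of a BP image, in terms of the original pair. -/
lemma BP_transfer (hμ : Good μ) (hν : Good ν) (hμ' : Good μ') (hν' : Good ν')
    (hm' : (∫ t : ℝ, t ∂ν') ≠ 0)
    (hT : TransformData μ ν R Rinv cR) (hT' : TransformData μ' ν' R' Rinv' cR')
    (hBP : IsBP μ ν cR' R') :
    ∀ᶠ y in 𝓝 (0:ℂ),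
      fT Rinv' y = fT Rinv (y / (1 - y)) ∧ cT cR' Rinv' y = cT cR Rinv (y / (1 - y)) := by
  rw [← good_map_momGenT hν' hm', eventually_map]
  have hw : Tendsto (fun z : ℂ => z * momGen ν' z) (𝓝 0) (𝓝 0) := good_tendsto_zmom hν'
  filter_upwards [TD_basic hμ' hν' hT',
    hw.eventually (TD_basic hμ hν hT),
    hw.eventually (ev_momGen_ne hμ),
    hw.eventually (ev_momGen_ne hν),
    hw.eventually (hBP.1.eventually),
    hw.eventually (hBP.2.eventually)] with z h' hTw hMμw hMνw hcR' hR'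
  set w : ℂ := z * momGen ν' z with hwdef
  have hy : momGenT ν' z = boolT ν w := by rw [h'.1]; exact hR'
  have hMν : momGen ν w ≠ 0 := hMνw
  have h1y : 1 - momGenT ν' z = (momGen ν w)⁻¹ := by
    rw [hy]; simp only [boolT]; ring
  have hx : momGenT ν' z / (1 - momGenT ν' z) = momGenT ν w := by
    rw [h1y, hy]; simp only [boolT, momGenT]
    field_simp
  have hyM : momGenT ν' z * momGen ν w = momGenT ν w := by
    rw [hy]; simp only [boolT, momGenT]
    field_simp
  have hRinv'y : Rinv' (momGenT ν' z) = w := h'.2.1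
  refine ⟨?_, ?_⟩
  · simp only [fT]
    rw [hRinv'y, hx, hTw.2.1, ← hyM, mul_comm (momGenT ν' z) (momGen ν w),
      mul_comm w (momGen ν w), mul_div_mul_left _ _ hMν]
  · simp only [cT]
    rw [hRinv'y, hx, hTw.2.1, hcR', hTw.2.2.1, mul_comm (boolT μ w) (momGen ν w),
      mul_comm w (momGen ν w), mul_div_mul_left _ _ hMν]
end


/-- The Boolean-to-c-free Bercovici–Pata bijection is a homomorphism with respect to
multiplicative c-free convolution: `BP((μ₁,ν₁) ⊠_c (μ₂,ν₂)) = BP(μ₁,ν₁) ⊠_c BP(μ₂,ν₂)`. -/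
theorem BP_multiplicative_homomorphism
    (μ₁ ν₁ μ₂ ν₂ μ₃ ν₃ μ₁' ν₁' μ₂' ν₂' μ₃' ν₃' σ τ : Measure ℝ)
    (hgood : Good μ₁ ∧ Good ν₁ ∧ Good μ₂ ∧ Good ν₂ ∧ Good μ₃ ∧ Good ν₃ ∧
      Good μ₁' ∧ Good ν₁' ∧ Good μ₂' ∧ Good ν₂' ∧ Good μ₃' ∧ Good ν₃' ∧ Good σ ∧ Good τ)
    (hmean : (∫ t : ℝ, t ∂ν₁) ≠ 0 ∧ (∫ t : ℝ, t ∂ν₂) ≠ 0 ∧ (∫ t : ℝ, t ∂ν₃) ≠ 0 ∧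
      (∫ t : ℝ, t ∂ν₁') ≠ 0 ∧ (∫ t : ℝ, t ∂ν₂') ≠ 0 ∧ (∫ t : ℝ, t ∂ν₃') ≠ 0 ∧
      (∫ t : ℝ, t ∂τ) ≠ 0)
    (R₁ Rinv₁ cR₁ R₂ Rinv₂ cR₂ R₃ Rinv₃ cR₃ : ℂ → ℂ)
    (R₁' Rinv₁' cR₁' R₂' Rinv₂' cR₂' R₃' Rinv₃' cR₃' Rσ Rinvσ cRσ : ℂ → ℂ)
    (hT₁ : TransformData μ₁ ν₁ R₁ Rinv₁ cR₁)
    (hT₂ : TransformData μ₂ ν₂ R₂ Rinv₂ cR₂)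
    (hT₃ : TransformData μ₃ ν₃ R₃ Rinv₃ cR₃)
    (hT₁' : TransformData μ₁' ν₁' R₁' Rinv₁' cR₁')
    (hT₂' : TransformData μ₂' ν₂' R₂' Rinv₂' cR₂')
    (hT₃' : TransformData μ₃' ν₃' R₃' Rinv₃' cR₃')
    (hTσ : TransformData σ τ Rσ Rinvσ cRσ)
    -- `(μ₃,ν₃) = (μ₁,ν₁) ⊠_c (μ₂,ν₂)`
    (hprod : IsCProd cR₁ Rinv₁ cR₂ Rinv₂ cR₃ Rinv₃)
    -- `(μᵢ',νᵢ') = BP(μᵢ,νᵢ)` for `i = 1, 2, 3`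
    (hBP₁ : IsBP μ₁ ν₁ cR₁' R₁') (hBP₂ : IsBP μ₂ ν₂ cR₂' R₂') (hBP₃ : IsBP μ₃ ν₃ cR₃' R₃')
    -- `(σ,τ) = BP(μ₁,ν₁) ⊠_c BP(μ₂,ν₂)`
    (hprod' : IsCProd cR₁' Rinv₁' cR₂' Rinv₂' cRσ Rinvσ) :
    μ₃' = σ ∧ ν₃' = τ := by
  obtain ⟨hgμ₁, hgν₁, hgμ₂, hgν₂, hgμ₃, hgν₃, hgμ₁', hgν₁', hgμ₂', hgν₂', hgμ₃', hgν₃',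
    hgσ, hgτ⟩ := hgood
  obtain ⟨hm₁, hm₂, hm₃, hm₁', hm₂', hm₃', hmτ⟩ := hmean
  have hxt : Tendsto (fun y : ℂ => y / (1 - y)) (𝓝 0) (𝓝 0) := by
    have h2 : Tendsto (fun y : ℂ => (1:ℂ) - y) (𝓝 0) (𝓝 ((1:ℂ) - 0)) :=
      tendsto_const_nhds.sub tendsto_id
    have h1 : Tendsto (fun y : ℂ => (1:ℂ) - y) (𝓝 0) (𝓝 1) := by simpa using h2
    have h : Tendsto (fun y : ℂ => y / ((1:ℂ) - y)) (𝓝 0) (𝓝 ((0:ℂ) / 1)) :=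
      Tendsto.div tendsto_id h1 one_ne_zero
    simpa using h
  have hB₁ := BP_transfer hgμ₁ hgν₁ hgμ₁' hgν₁' hm₁' hT₁ hT₁' hBP₁
  have hB₂ := BP_transfer hgμ₂ hgν₂ hgμ₂' hgν₂' hm₂' hT₂ hT₂' hBP₂
  have hB₃ := BP_transfer hgμ₃ hgν₃ hgμ₃' hgν₃' hm₃' hT₃ hT₃' hBP₃
  have hC2 : ∀ᶠ y in 𝓝 (0:ℂ), fT Rinvσ y = fT Rinv₃' y := by
    filter_upwards [hprod'.2.eventually, hB₁, hB₂, hB₃,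
      hxt.eventually hprod.2.eventually] with y h0 h1 h2 h3 h4
    rw [h0, h1.1, h2.1, h3.1, h4]
  have hC1 : ∀ᶠ y in 𝓝 (0:ℂ), cT cRσ Rinvσ y = cT cR₃' Rinv₃' y := by
    filter_upwards [hprod'.1.eventually, hB₁, hB₂, hB₃,
      hxt.eventually hprod.1.eventually] with y h0 h1 h2 h3 h4
    rw [h0, h1.2, h2.2, h3.2, h4]
  have hRinveq : ∀ᶠ y in 𝓝 (0:ℂ), y ≠ 0 → Rinvσ y = Rinv₃' y := by
    filter_upwards [hC2] with y h hy0
    simp only [fT] at h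
    exact div_cancel_aux hy0 h
  have hDτ := TD_basic hgσ hgτ hTσ
  have hD3' := TD_basic hgμ₃' hgν₃' hT₃'
  have htg : Tendsto (momGenT ν₃') (𝓝 0) (𝓝 0) := good_tendsto_momGenT hgν₃'
  have htf : Tendsto (momGenT τ) (𝓝 0) (𝓝 0) := good_tendsto_momGenT hgτ
  have hmapf : Filter.map (momGenT τ) (𝓝 0) = 𝓝 0 := good_map_momGenT hgτ hmτ
  have hsur : ∀ᶠ y in 𝓝 (0:ℂ), ∃ u : ℂ, momGenT τ u = y ∧ Rinvσ y = u * momGen τ u := by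
    rw [← hmapf, eventually_map]
    filter_upwards [hDτ] with u hu
    exact ⟨u, rfl, hu.2.1⟩
  -- second coordinate equality
  have hkey2 : ∀ᶠ z in 𝓝 (0:ℂ), z ≠ 0 → z ≠ Rinv₃' 0 → momGen ν₃' z = momGen τ z := by
    filter_upwards [hD3', htg.eventually hsur, htg.eventually hRinveq,
      ev_momGen_ne hgν₃'] with z h3 hs hr hMne hz0 hzz
    by_cases hgz : momGenT ν₃' z = 0
    · exfalso
      have h := h3.2.1
      rw [hgz] at h
      have hM1 : momGen ν₃' z = 1 := sub_eq_zero.mp hgz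
      rw [hM1, mul_one] at h
      exact hzz h.symm
    · have hre := hr hgz
      obtain ⟨u, hu1, hu2⟩ := hs
      have hMeq : momGen τ u = momGen ν₃' z := by
        have h2 : momGen τ u - 1 = momGen ν₃' z - 1 := hu1
        exact sub_left_inj.mp h2
      have hchain : u * momGen τ u = z * momGen ν₃' z := by
        rw [← hu2, hre]; exact h3.2.1
      have he : u * momGen ν₃' z = z * momGen ν₃' z := by
        rw [hMeq] at hchain; exact hchain
      have hu_eq : u = z := mul_right_cancel₀ hMne he
      rw [hu_eq] at hMeq
      exact hMeq.symm
  obtain ⟨ε, hε, hball⟩ := eventually_to_ball hkey2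
  have hnteq : ν₃' = τ :=
    measure_eq_of_moments hgν₃' hgτ (moments_eq hgν₃' hgτ hε hball)
  refine ⟨?_, hnteq⟩
  -- first coordinate
  have hkey1 : ∀ᶠ z in 𝓝 (0:ℂ), z ≠ 0 → z ≠ Rinvσ 0 → momGen μ₃' z = momGen σ z := by
    filter_upwards [hDτ, hD3', htf.eventually hC1, htf.eventually hRinveq,
      ev_momGen_ne hgτ] with z hdτ hd3 hc1 hre hMτ hz0 hzz
    by_cases hfz : momGenT τ z = 0
    · exfalso
      have h := hdτ.2.1
      rw [hfz] at h
      have hM1 : momGen τ z = 1 := sub_eq_zero.mp hfz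
      rw [hM1, mul_one] at h
      exact hzz h.symm
    · have hw0 : z * momGen τ z ≠ 0 := mul_ne_zero hz0 hMτ
      have hra : Rinvσ (momGenT τ z) = z * momGen τ z := hdτ.2.1
      have hrb : Rinv₃' (momGenT τ z) = z * momGen τ z := by rw [← hre hfz]; exact hra
      have hceq : cRσ (z * momGen τ z) = cR₃' (z * momGen τ z) := by
        simp only [cT] at hc1
        rw [hra, hrb] at hc1
        rw [div_eq_div_iff hw0 hw0] at hc1
        exact mul_right_cancel₀ hw0 hc1
      have e1 := hdτ.2.2.2
      have e2 := hd3.2.2.2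
      rw [hnteq] at e2
      rw [← hceq] at e2
      set c := cRσ (z * momGen τ z) with hcdef
      have h5 : momGen σ z * (momGen τ z - c) = momGen τ z := by linear_combination e1
      have h6 : momGen μ₃' z * (momGen τ z - c) = momGen τ z := by linear_combination e2
      have hd : momGen τ z - c ≠ 0 := by
        intro hdc
        rw [hdc, mul_zero] at h5
        exact hMτ h5.symm
      exact mul_right_cancel₀ hd (h6.trans h5.symm)
  obtain ⟨ε₂, hε₂, hball₂⟩ := eventually_to_ball hkey1
  exact measure_eq_of_moments hgμ₃' hgσ (moments_eq hgμ₃' hgσ hε₂ hball₂)
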